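/- Let T : Δ ⇉ ℝ^d be a multivalued map taking nonempty values, and let N ⊆ Δ be a set of (d−1)-dimensional Lebesgue measure zero such that T is multiplicatively cyclically monotone on Δ∖N, i.e., for every m ∈ ℕ, every cycle x_0, …, x_m ∈ Δ∖N with x_m = x_0, and every choice y_i ∈ T(x_i): ⟨y_i, x_{i+1} − x_i⟩ ≥ −1 for all i and ∏_{i=0}^{m−1}(1 + ⟨y_i, x_{i+1} − x_i⟩) ≥ 1. Then there exists an exponentially concave function φ : Δ → ℝ such that T(x) ⊆ ∂φ(x) for every x ∈ Δ∖N. -/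

import Mathlib

open scoped BigOperators
open MeasureTheory

/-- The open unit simplex in `ℝ^d`. -/
def openSimplex (d : ℕ) : Set (Fin d → ℝ) :=
  {x | (∀ i, 0 < x i) ∧ ∑ i, x i = 1}

/-- A function `φ` on the open simplex is exponentially concave if `e^φ` is concave there. -/
def ExpConcave {d : ℕ} (φ : (Fin d → ℝ) → ℝ) : Prop :=
  ConcaveOn ℝ (openSimplex d) (fun x => Real.exp (φ x))

/-- The superdifferential of `φ` at `x` (relative to the open simplex). -/
def superdiff {d : ℕ} (φ : (Fin d → ℝ) → ℝ) (x : Fin d → ℝ) : Set (Fin d → ℝ) :=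
  {y | ∀ q ∈ openSimplex d, φ q ≤ φ x + ∑ k, y k * (q k - x k)}

/-- The `(d-1)`-dimensional Lebesgue measure on the hyperplane `{∑ xᶦ = 1}`, realized as
the pushforward of Lebesgue measure on `ℝ^{d-1}` under
`(x¹,…,x^{d-1}) ↦ (x¹,…,x^{d-1}, 1 - ∑_{i<d-1} xᶦ)`. -/
noncomputable def simplexMeasure (d : ℕ) : Measure (Fin d → ℝ) :=
  Measure.map
    (fun y : Fin (d - 1) → ℝ => fun i : Fin d =>
      if h : (i : ℕ) < d - 1 then y ⟨(i : ℕ), h⟩ else 1 - ∑ j, y j)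
    volume

namespace Stmt4

variable {d : ℕ}

/-- inner-product-like pairing used throughout. -/
def ip (y v w : Fin d → ℝ) : ℝ := ∑ k, y k * (v k - w k)

lemma ip_self (y x : Fin d → ℝ) : ip y x x = 0 := by simp [ip]

lemma ip_combo (y w a b : Fin d → ℝ) {t s : ℝ} (h : t + s = 1) :
    ip y (t • a + s • b) w = t * ip y a w + s * ip y b w := by
  have hs : s = 1 - t := by linarith
  subst hs
  simp only [ip, Finset.mul_sum, ← Finset.sum_add_distrib]
  refine Finset.sum_congr rfl fun k _ => ?_
  simp only [Pi.add_apply, Pi.smul_apply, smul_eq_mul]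
  ring

/-- Candidate affine functions built from chains starting at `x₀` in `S`. -/
def candF (T : (Fin d → ℝ) → Set (Fin d → ℝ)) (S : Set (Fin d → ℝ)) (x₀ : Fin d → ℝ) :
    Set ((Fin d → ℝ) → ℝ) :=
  {F | ∃ (m : ℕ) (x y : ℕ → Fin d → ℝ), x 0 = x₀ ∧ (∀ i ≤ m, x i ∈ S) ∧
      (∀ i ≤ m, y i ∈ T (x i)) ∧
      F = fun q => (∏ i ∈ Finset.range m, (1 + ip (y i) (x (i+1)) (x i))) * (1 + ip (y m) q (x m))}

lemma candF_continuous {T : (Fin d → ℝ) → Set (Fin d → ℝ)} {S x₀}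
    {F : (Fin d → ℝ) → ℝ} (hF : F ∈ candF T S x₀) : Continuous F := by
  obtain ⟨m, x, y, -, -, -, rfl⟩ := hF
  unfold ip
  fun_prop

lemma candF_affine {T : (Fin d → ℝ) → Set (Fin d → ℝ)} {S x₀} {F} (hF : F ∈ candF T S x₀)
    (a b : Fin d → ℝ) {t s : ℝ} (h : t + s = 1) :
    F (t • a + s • b) = t * F a + s * F b := by
  obtain ⟨m, x, y, -, -, -, rfl⟩ := hF
  simp only
  rw [ip_combo _ _ _ _ h]
  linear_combination (-(∏ i ∈ Finset.range m, (1 + ip (y i) (x (i+1)) (x i)))) * h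

lemma candF_extend {T : (Fin d → ℝ) → Set (Fin d → ℝ)} {S x₀} {F} (hF : F ∈ candF T S x₀)
    {xn yn : Fin d → ℝ} (hxn : xn ∈ S) (hyn : yn ∈ T xn) :
    (fun q => F xn * (1 + ip yn q xn)) ∈ candF T S x₀ := by
  obtain ⟨m, x, y, h0, hxS, hyT, rfl⟩ := hF
  refine ⟨m+1, fun i => if i ≤ m then x i else xn, fun i => if i ≤ m then y i else yn,
    by simpa using h0, ?_, ?_, ?_⟩
  · intro i hi
    by_cases h : i ≤ m
    · simpa [h] using hxS i h
    · simpa [h] using hxn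
  · intro i hi
    by_cases h : i ≤ m
    · simpa [h] using hyT i h
    · simpa [h] using hyn
  · funext q
    have hm : ¬ (m + 1 ≤ m) := by omega
    have e1 : (∏ i ∈ Finset.range m,
        (1 + ip (if i ≤ m then y i else yn) (if i+1 ≤ m then x (i+1) else xn)
          (if i ≤ m then x i else xn)))
        = ∏ i ∈ Finset.range m, (1 + ip (y i) (x (i+1)) (x i)) := by
      refine Finset.prod_congr rfl fun i hi => ?_
      have h1 : i ≤ m := (Finset.mem_range.mp hi).le
      have h2 : i + 1 ≤ m := Finset.mem_range.mp hi
      simp [h1, h2]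
    simp only [Finset.prod_range_succ, hm, if_false, le_refl, if_true, ite_true, ite_false]
    rw [e1]

end Stmt4

namespace Stmt4

lemma simplex_dense {d : ℕ} (hd : 2 ≤ d) {N : Set (Fin d → ℝ)}
    (hNnull : simplexMeasure d N = 0) {x : Fin d → ℝ} (hx : x ∈ openSimplex d)
    {ε : ℝ} (hε : 0 < ε) : ∃ z, z ∈ openSimplex d \ N ∧ dist z x < ε := by
  obtain ⟨n, rfl⟩ : ∃ n, d = n + 1 := ⟨d - 1, by omega⟩
  set g : (Fin n → ℝ) → (Fin (n+1) → ℝ) :=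
    fun y => fun i => if h : (i : ℕ) < n then y ⟨(i : ℕ), h⟩ else 1 - ∑ j, y j with hg
  have hmeas : simplexMeasure (n+1) = Measure.map g volume := rfl
  have hgc : Continuous g := by
    apply continuous_pi; intro i
    by_cases h : (i : ℕ) < n
    · simp only [hg, dif_pos h]; exact continuous_apply _
    · simp only [hg, dif_neg h]
      exact continuous_const.sub (continuous_finset_sum _ fun j _ => continuous_apply j)
  have hcast : ∀ (y : Fin n → ℝ) (j : Fin n), g y (Fin.castSucc j) = y j := by
    intro y j
    simp [hg, j.isLt]
  have hlast : ∀ (y : Fin n → ℝ), g y (Fin.last n) = 1 - ∑ j, y j := by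
    intro y
    simp [hg]
  have hsum : ∀ y, ∑ i, g y i = 1 := by
    intro y
    rw [Fin.sum_univ_castSucc, Finset.sum_congr rfl (fun j _ => hcast y j), hlast]
    ring
  have hmem : ∀ y, (g y ∈ openSimplex (n+1) ↔ ∀ i, 0 < g y i) := fun y =>
    ⟨fun h => h.1, fun h => ⟨h, hsum y⟩⟩
  have hopen : IsOpen (g ⁻¹' (openSimplex (n+1))) := by
    have he : g ⁻¹' (openSimplex (n+1)) = ⋂ i, (fun y => g y i) ⁻¹' Set.Ioi 0 := by
      ext y
      simp only [Set.mem_preimage, Set.mem_iInter, Set.mem_Ioi]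
      exact hmem y
    rw [he]
    exact isOpen_iInter_of_finite fun i => (isOpen_Ioi).preimage ((continuous_apply i).comp hgc)
  set y₀ : Fin n → ℝ := fun j => x (Fin.castSucc j) with hy₀
  have hgy₀ : g y₀ = x := by
    funext i
    induction i using Fin.lastCases with
    | last =>
      rw [hlast]
      have := hx.2
      rw [Fin.sum_univ_castSucc] at this
      simp only [hy₀]
      linarith
    | cast j => rw [hcast]
  set U : Set (Fin n → ℝ) := g ⁻¹' (Metric.ball x ε) ∩ g ⁻¹' (openSimplex (n+1)) with hU
  have hUopen : IsOpen U := (Metric.isOpen_ball.preimage hgc).inter hopen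
  have hy₀U : y₀ ∈ U := by
    constructor
    · rw [Set.mem_preimage, hgy₀]
      exact Metric.mem_ball_self hε
    · rw [Set.mem_preimage, hgy₀]
      exact hx
  have hAmeas : MeasurableSet (Metric.ball x ε ∩ openSimplex (n+1)) := by
    apply MeasurableSet.inter measurableSet_ball
    have he : openSimplex (n+1) =
        (⋂ i, {p : Fin (n+1) → ℝ | 0 < p i}) ∩ {p | ∑ i, p i = 1} := by
      ext p; simp [openSimplex, Set.mem_iInter]
    rw [he]
    refine (MeasurableSet.iInter fun i =>
      measurableSet_lt measurable_const (measurable_pi_apply i)).inter ?_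
    exact measurableSet_eq_fun (Finset.measurable_sum _ fun i _ => measurable_pi_apply i)
      measurable_const
  have hApos : 0 < simplexMeasure (n+1) (Metric.ball x ε ∩ openSimplex (n+1)) := by
    rw [hmeas, Measure.map_apply hgc.measurable hAmeas, Set.preimage_inter]
    exact hUopen.measure_pos volume ⟨y₀, hy₀U⟩
  by_contra h
  push_neg at h
  have hsub : Metric.ball x ε ∩ openSimplex (n+1) ⊆ N := by
    rintro z ⟨hz1, hz2⟩
    by_contra hzN
    have := h z ⟨hz2, hzN⟩
    rw [Metric.mem_ball] at hz1
    linarith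
  have hle := measure_mono (μ := simplexMeasure (n+1)) hsub
  rw [hNnull] at hle
  exact absurd (le_antisymm hle zero_le) (ne_of_gt hApos)

end Stmt4

open Stmt4

/-- a multivalued map with nonempty values that is multiplicatively
cyclically monotone outside a Lebesgue-null subset `N` of the simplex is contained in the
superdifferential of some exponentially concave function, off `N`. -/
theorem statement4 {d : ℕ} (hd : 2 ≤ d)
    (T : (Fin d → ℝ) → Set (Fin d → ℝ))
    (hT : ∀ x ∈ openSimplex d, (T x).Nonempty)
    (N : Set (Fin d → ℝ)) (hNsub : N ⊆ openSimplex d) (hNnull : simplexMeasure d N = 0)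
    (hMCM : ∀ (m : ℕ) (x y : ℕ → Fin d → ℝ),
      (∀ i, i ≤ m → x i ∈ openSimplex d \ N) → x m = x 0 →
      (∀ i, i < m → y i ∈ T (x i)) →
      (∀ i, i < m → -1 ≤ ∑ k, y i k * (x (i + 1) k - x i k)) ∧
      1 ≤ ∏ i ∈ Finset.range m, (1 + ∑ k, y i k * (x (i + 1) k - x i k))) :
    ∃ φ : (Fin d → ℝ) → ℝ, ExpConcave φ ∧
      ∀ x ∈ openSimplex d \ N, T x ⊆ superdiff φ x := by
  classical
  have hdpos : 0 < d := by omega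
  -- the barycenter lies in the simplex
  have hcenter : (fun _ : Fin d => (d:ℝ)⁻¹) ∈ openSimplex d := by
    constructor
    · intro i
      have : (0:ℝ) < d := by exact_mod_cast hdpos
      positivity
    · rw [Finset.sum_const, Finset.card_univ, Fintype.card_fin, nsmul_eq_mul]
      field_simp
  obtain ⟨x₀, hx₀S, -⟩ := simplex_dense hd hNnull hcenter one_pos
  obtain ⟨y₀, hy₀⟩ := hT x₀ hx₀S.1
  set S : Set (Fin d → ℝ) := openSimplex d \ N with hSdef
  set CF := candF T S x₀ with hCF
  -- the trivial one-point chain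
  have hF₀ : (fun q => (∏ i ∈ Finset.range 0,
      (1 + ip ((fun _ => y₀) i) ((fun _ : ℕ => x₀) (i+1)) ((fun _ : ℕ => x₀) i))) *
      (1 + ip ((fun _ => y₀) 0) q ((fun _ : ℕ => x₀) 0))) ∈ CF :=
    ⟨0, fun _ => x₀, fun _ => y₀, rfl, fun _ _ => hx₀S, fun _ _ => hy₀, rfl⟩
  have hne : ∀ q, ((fun F => F q) '' CF).Nonempty := fun q => ⟨_, _, hF₀, rfl⟩
  -- cycle-closing consequences of hMCM
  have close : ∀ (m : ℕ) (x y : ℕ → Fin d → ℝ),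
      (∀ i ≤ m, x i ∈ S) → (∀ i ≤ m, y i ∈ T (x i)) →
      ∀ z ∈ S, ∀ yz ∈ T z,
      (∀ i < m, 0 ≤ 1 + ip (y i) (x (i+1)) (x i)) ∧
      0 ≤ 1 + ip (y m) z (x m) ∧ 0 ≤ 1 + ip yz (x 0) z ∧
      1 ≤ (∏ i ∈ Finset.range m, (1 + ip (y i) (x (i+1)) (x i))) *
          (1 + ip (y m) z (x m)) * (1 + ip yz (x 0) z) := by
    intro m x y hxS hyT z hz yz hyz
    set X : ℕ → Fin d → ℝ := fun i => if i ≤ m then x i else if i = m+1 then z else x 0 with hX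
    set Y : ℕ → Fin d → ℝ := fun i => if i ≤ m then y i else yz with hY
    have eX : ∀ i ≤ m, X i = x i := fun i hi => by simp [hX, hi]
    have hm1 : ¬ (m + 1 ≤ m) := by omega
    have hm2 : ¬ (m + 2 ≤ m) := by omega
    have hm3 : ¬ (m + 2 = m + 1) := by omega
    have eXm1 : X (m+1) = z := by simp [hX, hm1]
    have eXm2 : X (m+2) = x 0 := by simp [hX, hm2, hm3]
    have eY : ∀ i ≤ m, Y i = y i := fun i hi => by simp [hY, hi]
    have eYm1 : Y (m+1) = yz := by simp [hY, hm1]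
    have h1 : ∀ i, i ≤ m + 2 → X i ∈ openSimplex d \ N := by
      intro i hi
      by_cases h : i ≤ m
      · rw [eX i h]; exact hxS i h
      · by_cases h2 : i = m + 1
        · rw [h2, eXm1]; exact hz
        · have : i = m + 2 := by omega
          rw [this, eXm2]; exact hxS 0 (Nat.zero_le m)
    have h2 : X (m+2) = X 0 := by rw [eXm2, eX 0 (Nat.zero_le m)]
    have h3 : ∀ i, i < m + 2 → Y i ∈ T (X i) := by
      intro i hi
      by_cases h : i ≤ m
      · rw [eX i h, eY i h]; exact hyT i h
      · have : i = m + 1 := by omega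
        rw [this, eXm1, eYm1]; exact hyz
    obtain ⟨hA, hB⟩ := hMCM (m+2) X Y h1 h2 h3
    have hA' : ∀ i < m+2, -1 ≤ ip (Y i) (X (i+1)) (X i) := hA
    have hB' : 1 ≤ ∏ i ∈ Finset.range (m+2), (1 + ip (Y i) (X (i+1)) (X i)) := hB
    rw [Finset.prod_range_succ, Finset.prod_range_succ] at hB'
    have eprod : (∏ i ∈ Finset.range m, (1 + ip (Y i) (X (i+1)) (X i)))
        = ∏ i ∈ Finset.range m, (1 + ip (y i) (x (i+1)) (x i)) := by
      refine Finset.prod_congr rfl fun i hi => ?_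
      have hi' := Finset.mem_range.mp hi
      rw [eX i hi'.le, eX (i+1) hi', eY i hi'.le]
    rw [eprod, eX m le_rfl, eXm1, eXm2, eY m le_rfl, eYm1] at hB'
    refine ⟨?_, ?_, ?_, hB'⟩
    · intro i hi
      have := hA' i (by omega)
      rw [eX i hi.le, eX (i+1) hi, eY i hi.le] at this
      linarith
    · have := hA' m (by omega)
      rw [eX m le_rfl, eXm1, eY m le_rfl] at this
      linarith
    · have := hA' (m+1) (by omega)
      rw [eXm1, eXm2, eYm1] at this
      linarith
  -- candidates are positive on S (uniformly per point), nonneg on S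
  have Fpos_S : ∀ F ∈ CF, ∀ z ∈ S, ∀ yz ∈ T z,
      0 ≤ F z ∧ 0 < 1 + ip yz x₀ z ∧ 1 ≤ F z * (1 + ip yz x₀ z) := by
    intro F hF z hz yz hyz
    obtain ⟨m, x, y, h0, hxS, hyT, rfl⟩ := hF
    obtain ⟨hfac, hzfac, hcfac, hprod⟩ := close m x y hxS hyT z hz yz hyz
    rw [h0] at hcfac hprod
    have hFz : 0 ≤ (∏ i ∈ Finset.range m, (1 + ip (y i) (x (i+1)) (x i))) *
        (1 + ip (y m) z (x m)) :=
      mul_nonneg (Finset.prod_nonneg fun i hi => hfac i (Finset.mem_range.mp hi)) hzfac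
    refine ⟨hFz, ?_, hprod⟩
    rcases eq_or_lt_of_le hcfac with hc | hc
    · exfalso; rw [← hc] at hprod; simp at hprod; linarith
    · exact hc
  have Fone : ∀ F ∈ CF, 1 ≤ F x₀ := by
    intro F hF
    have := (Fpos_S F hF x₀ hx₀S y₀ hy₀).2.2
    rwa [ip_self, add_zero, mul_one] at this
  -- candidates are nonnegative on the whole simplex (density argument)
  have Fnonneg : ∀ F ∈ CF, ∀ q ∈ openSimplex d, 0 ≤ F q := by
    intro F hF q hq
    by_contra hneg
    push_neg at hneg
    obtain ⟨δ, hδ, hball⟩ := Metric.continuous_iff.mp (candF_continuous hF) q (-F q) (by linarith)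
    obtain ⟨z, hzS, hzd⟩ := simplex_dense hd hNnull hq hδ
    obtain ⟨yz, hyz⟩ := hT z hzS.1
    have h1 := hball z hzd
    rw [Real.dist_eq] at h1
    have h2 := (Fpos_S F hF z hzS yz hyz).1
    have h3 := abs_lt.mp h1
    linarith [h3.1, h3.2]
  set Φ : (Fin d → ℝ) → ℝ := fun q => sInf ((fun F => F q) '' CF) with hΦdef
  have hbdd : ∀ q ∈ openSimplex d, BddBelow ((fun F => F q) '' CF) := by
    intro q hq
    refine ⟨0, ?_⟩
    rintro v ⟨F, hF, rfl⟩
    exact Fnonneg F hF q hq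
  have hΦ_le : ∀ q ∈ openSimplex d, ∀ F ∈ CF, Φ q ≤ F q := fun q hq F hF =>
    csInf_le (hbdd q hq) ⟨F, hF, rfl⟩
  have hΦx₀ : 1 ≤ Φ x₀ := by
    refine le_csInf (hne x₀) ?_
    rintro v ⟨F, hF, rfl⟩
    exact Fone F hF
  have hΦnonneg : ∀ q ∈ openSimplex d, 0 ≤ Φ q := by
    intro q hq
    refine le_csInf (hne q) ?_
    rintro v ⟨F, hF, rfl⟩
    exact Fnonneg F hF q hq
  -- convexity of the simplex
  have hconv : Convex ℝ (openSimplex d) := by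
    intro p hp r hr a b ha hb hab
    constructor
    · intro i
      have h1 : 0 < p i := hp.1 i
      have h2 : 0 < r i := hr.1 i
      have he : (a • p + b • r) i = a * p i + b * r i := by simp
      rw [he]
      rcases eq_or_lt_of_le ha with h | h
      · have hb1 : b = 1 := by linarith
        rw [← h, hb1]; simpa using h2
      · exact add_pos_of_pos_of_nonneg (mul_pos h h1) (mul_nonneg hb h2.le)
    · simp only [Pi.add_apply, Pi.smul_apply, smul_eq_mul]
      rw [Finset.sum_add_distrib, ← Finset.mul_sum, ← Finset.mul_sum, hp.2, hr.2]
      linarith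
  -- concavity of Φ
  have hΦconc : ConcaveOn ℝ (openSimplex d) Φ := by
    refine ⟨hconv, ?_⟩
    intro p hp r hr a b ha hb hab
    refine le_csInf (hne _) ?_
    rintro v ⟨F, hF, rfl⟩
    simp only
    rw [candF_affine hF p r hab]
    have h1 : Φ p ≤ F p := hΦ_le p hp F hF
    have h2 : Φ r ≤ F r := hΦ_le r hr F hF
    simp only [smul_eq_mul]
    exact add_le_add (mul_le_mul_of_nonneg_left h1 ha) (mul_le_mul_of_nonneg_left h2 hb)
  -- strict positivity of Φ on the simplex
  have hx₀lt : ∀ i, x₀ i < 1 := by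
    intro i
    have hsum : x₀ i + ∑ j ∈ Finset.univ.erase i, x₀ j = 1 := by
      rw [Finset.add_sum_erase _ _ (Finset.mem_univ i)]
      exact hx₀S.1.2
    obtain ⟨j, -, hji⟩ := Finset.exists_mem_ne
      (by rw [Finset.card_univ, Fintype.card_fin]; omega) i
    have hne' : (Finset.univ.erase i).Nonempty :=
      ⟨j, Finset.mem_erase.mpr ⟨hji, Finset.mem_univ j⟩⟩
    have hpos' : 0 < ∑ j ∈ Finset.univ.erase i, x₀ j :=
      Finset.sum_pos (fun j _ => hx₀S.1.1 j) hne'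
    linarith
  have hΦpos : ∀ q ∈ openSimplex d, 0 < Φ q := by
    intro q hq
    haveI : Nonempty (Fin d) := ⟨⟨0, hdpos⟩⟩
    set ε : ℝ := Finset.univ.inf' Finset.univ_nonempty q with hεdef
    have hεpos : 0 < ε := by
      rw [hεdef, Finset.lt_inf'_iff]
      exact fun i _ => hq.1 i
    have hεle : ∀ i, ε ≤ q i := fun i => Finset.inf'_le _ (Finset.mem_univ i)
    set w : Fin d → ℝ := fun i => q i + ε * (q i - x₀ i) with hwdef
    have hw : w ∈ openSimplex d := by
      constructor
      · intro i
        have e1 : w i = q i + ε * q i - ε * x₀ i := by rw [hwdef]; ring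
        have e2 : 0 ≤ ε * q i := mul_nonneg hεpos.le (hq.1 i).le
        have e3 : ε * x₀ i < ε * 1 := by
          exact mul_lt_mul_of_pos_left (hx₀lt i) hεpos
        have e4 := hεle i
        rw [e1]; linarith
      · have : ∑ i, w i = ∑ i, q i + ε * (∑ i, q i - ∑ i, x₀ i) := by
          rw [hwdef, Finset.sum_add_distrib, ← Finset.mul_sum, Finset.sum_sub_distrib]
        rw [this, hq.2, hx₀S.1.2]; ring
    have h1ε : (0:ℝ) < 1 + ε := by linarith
    have hcombo : (1/(1+ε)) • w + (ε/(1+ε)) • x₀ = q := by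
      funext i
      simp only [Pi.add_apply, Pi.smul_apply, smul_eq_mul, hwdef]
      field_simp
      ring
    have habsum : 1/(1+ε) + ε/(1+ε) = 1 := by field_simp
    have := hΦconc.2 hw hx₀S.1 (by positivity) (by positivity) habsum
    rw [hcombo] at this
    simp only [smul_eq_mul] at this
    have t1 : 0 ≤ 1/(1+ε) * Φ w := mul_nonneg (by positivity) (hΦnonneg w hw)
    have t2 : ε/(1+ε) * 1 ≤ ε/(1+ε) * Φ x₀ :=
      mul_le_mul_of_nonneg_left hΦx₀ (by positivity)
    have t3 : 0 < ε/(1+ε) := by positivity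
    nlinarith
  -- the key superdifferential inequality for Φ
  have hkey : ∀ x ∈ S, ∀ y ∈ T x, ∀ q ∈ openSimplex d,
      0 < 1 + ip y q x ∧ Φ q ≤ Φ x * (1 + ip y q x) := by
    intro x hxS y hy q hq
    have hxΔ : x ∈ openSimplex d := hxS.1
    have hstep : ∀ F ∈ CF, Φ q ≤ F x * (1 + ip y q x) := by
      intro F hF
      have h' := hΦ_le q hq _ (candF_extend hF hxS hy)
      simpa using h'
    have ht0 : 0 < 1 + ip y q x := by
      by_contra hcon
      push_neg at hcon
      have h1 := hstep _ hF₀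
      have h2 := (Fpos_S _ hF₀ x hxS y hy).1
      have h3 := hΦpos q hq
      nlinarith
    refine ⟨ht0, ?_⟩
    have hdiv : Φ q / (1 + ip y q x) ≤ Φ x := by
      refine le_csInf (hne x) ?_
      rintro v ⟨F, hF, rfl⟩
      exact (div_le_iff₀ ht0).mpr (hstep F hF)
    calc Φ q = Φ q / (1 + ip y q x) * (1 + ip y q x) :=
          (div_mul_cancel₀ _ (ne_of_gt ht0)).symm
      _ ≤ Φ x * (1 + ip y q x) := mul_le_mul_of_nonneg_right hdiv ht0.le
  -- assemble
  refine ⟨fun q => Real.log (Φ q), ?_, ?_⟩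
  · refine ⟨hconv, ?_⟩
    intro p hp r hr a b ha hb hab
    have hm := hconv hp hr ha hb hab
    simp only
    rw [Real.exp_log (hΦpos p hp), Real.exp_log (hΦpos r hr), Real.exp_log (hΦpos _ hm)]
    exact hΦconc.2 hp hr ha hb hab
  · intro x hx y hy q hq
    obtain ⟨ht, hΦq⟩ := hkey x hx y hy q hq
    have hΦxpos := hΦpos x hx.1
    have h1 : Real.log (Φ q) ≤ Real.log (Φ x * (1 + ip y q x)) :=
      Real.log_le_log (hΦpos q hq) hΦq
    rw [Real.log_mul (ne_of_gt hΦxpos) (ne_of_gt ht)] at h1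
    have h2 : Real.log (1 + ip y q x) ≤ ip y q x := by
      have := Real.log_le_sub_one_of_pos ht
      linarith
    show Real.log (Φ q) ≤ Real.log (Φ x) + ip y q x
    linarith
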